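/- Let η, σ be finite positive measures on a bounded domain Ω with total masses A = η(Ω) > 0 and B = σ(Ω) > 0. Let γ be a nonnegative measure on Ω × Ω whose KL penalties satisfy KL(γ₀ | η) + KL(γ₁ | σ) ≤ A + B, where γ₀, γ₁ are the marginals of γ. Then the total mass s = γ(Ω × Ω) satisfies s ≤ e·√(A·B). -/

import Mathlib

open MeasureTheory

/-- Unnormalized (generalized) Kullback–Leibler divergence between finite
positive measures: `KLu ρ η = ∫ (f log f − f + 1) dη` with `f = dρ/dη`. -/
noncomputable def KLu {X : Type*} [MeasurableSpace X] (ρ η : Measure X) : ℝ :=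
  ∫ x, ((ρ.rnDeriv η x).toReal * Real.log (ρ.rnDeriv η x).toReal
        - (ρ.rnDeriv η x).toReal + 1) ∂η

/-- Tangent-line inequality for `t ↦ t log t − t + 1`. -/
lemma klu_pointwise (t c : ℝ) (ht : 0 ≤ t) (hc : 0 < c) :
    t * Real.log c - c + 1 ≤ t * Real.log t - t + 1 := by
  rcases eq_or_lt_of_le ht with h | h
  · have ht0 : t = 0 := h.symm
    subst ht0
    have : Real.log 0 = 0 := Real.log_zero
    nlinarith
  · have h1 : Real.log (c / t) ≤ c / t - 1 := Real.log_le_sub_one_of_pos (by positivity)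
    have h2 : Real.log (c / t) = Real.log c - Real.log t := Real.log_div hc.ne' h.ne'
    have h3 := mul_le_mul_of_nonneg_left h1 h.le
    rw [h2] at h3
    have ht' : t * (c / t - 1) = c - t := by field_simp
    nlinarith

lemma KLu_ge {X : Type*} [MeasurableSpace X] (ρ η : Measure X)
    [IsFiniteMeasure ρ] [IsFiniteMeasure η] (hac : ρ ≪ η)
    (hint : Integrable (fun x => (ρ.rnDeriv η x).toReal * Real.log (ρ.rnDeriv η x).toReal
        - (ρ.rnDeriv η x).toReal + 1) η)
    (c : ℝ) (hc : 0 < c) :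
    (ρ Set.univ).toReal * Real.log c - (η Set.univ).toReal * c + (η Set.univ).toReal
      ≤ KLu ρ η := by
  have hfint : Integrable (fun x => (ρ.rnDeriv η x).toReal) η :=
    Measure.integrable_toReal_rnDeriv
  have hs : ∫ x, (ρ.rnDeriv η x).toReal ∂η = (ρ Set.univ).toReal :=
    Measure.integral_toReal_rnDeriv hac
  have hint2 : Integrable (fun x => (ρ.rnDeriv η x).toReal * Real.log c - c + 1) η :=
    ((hfint.mul_const _).sub (integrable_const c)).add (integrable_const 1)
  have hmono : ∫ x, ((ρ.rnDeriv η x).toReal * Real.log c - c + 1) ∂η ≤ KLu ρ η :=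
    integral_mono hint2 hint fun x => klu_pointwise _ _ ENNReal.toReal_nonneg hc
  have hcomp : ∫ x, ((ρ.rnDeriv η x).toReal * Real.log c - c + 1) ∂η
      = (ρ Set.univ).toReal * Real.log c - (η Set.univ).toReal * c + (η Set.univ).toReal := by
    have h1 : ∫ x, ((ρ.rnDeriv η x).toReal * Real.log c - c + 1) ∂η
        = ∫ x, ((ρ.rnDeriv η x).toReal * Real.log c - c) ∂η + ∫ _x, (1:ℝ) ∂η :=
      integral_add ((hfint.mul_const _).sub (integrable_const c)) (integrable_const 1)
    have h2 : ∫ x, ((ρ.rnDeriv η x).toReal * Real.log c - c) ∂η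
        = ∫ x, ((ρ.rnDeriv η x).toReal * Real.log c) ∂η - ∫ _x, (c:ℝ) ∂η :=
      integral_sub (hfint.mul_const _) (integrable_const c)
    rw [h1, h2, integral_mul_const, hs, integral_const, integral_const]
    simp [smul_eq_mul, mul_comm, Measure.real]
  linarith [hmono, hcomp.symm.le, hcomp.le]

theorem stmt6 {X : Type*} [MeasurableSpace X]
    (η σ : Measure X) [IsFiniteMeasure η] [IsFiniteMeasure σ]
    (γ : Measure (X × X)) [IsFiniteMeasure γ]
    (hA : 0 < (η Set.univ).toReal) (hB : 0 < (σ Set.univ).toReal)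
    (h0ac : γ.map Prod.fst ≪ η) (h1ac : γ.map Prod.snd ≪ σ)
    (h0int : Integrable (fun x =>
      ((γ.map Prod.fst).rnDeriv η x).toReal
          * Real.log ((γ.map Prod.fst).rnDeriv η x).toReal
        - ((γ.map Prod.fst).rnDeriv η x).toReal + 1) η)
    (h1int : Integrable (fun y =>
      ((γ.map Prod.snd).rnDeriv σ y).toReal
          * Real.log ((γ.map Prod.snd).rnDeriv σ y).toReal
        - ((γ.map Prod.snd).rnDeriv σ y).toReal + 1) σ)
    (hKL : KLu (γ.map Prod.fst) η + KLu (γ.map Prod.snd) σ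
        ≤ (η Set.univ).toReal + (σ Set.univ).toReal) :
    (γ Set.univ).toReal
      ≤ Real.exp 1 * Real.sqrt ((η Set.univ).toReal * (σ Set.univ).toReal) := by
  set A := (η Set.univ).toReal with hAdef
  set B := (σ Set.univ).toReal with hBdef
  have hm0 : (γ.map Prod.fst) Set.univ = γ Set.univ := by
    rw [Measure.map_apply measurable_fst MeasurableSet.univ, Set.preimage_univ]
  have hm1 : (γ.map Prod.snd) Set.univ = γ Set.univ := by
    rw [Measure.map_apply measurable_snd MeasurableSet.univ, Set.preimage_univ]
  set s := (γ Set.univ).toReal with hsdef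
  rcases eq_or_lt_of_le (ENNReal.toReal_nonneg : (0:ℝ) ≤ s) with hs0 | hs
  · simp only [hsdef, ← hs0]; positivity
  · have inst0 : IsFiniteMeasure (γ.map Prod.fst) :=
      ⟨by rw [hm0]; exact measure_lt_top γ _⟩
    have inst1 : IsFiniteMeasure (γ.map Prod.snd) :=
      ⟨by rw [hm1]; exact measure_lt_top γ _⟩
    have hg0 := KLu_ge (γ.map Prod.fst) η h0ac h0int (s / A) (by positivity)
    have hg1 := KLu_ge (γ.map Prod.snd) σ h1ac h1int (s / B) (by positivity)
    rw [hm0] at hg0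
    rw [hm1] at hg1
    have hA' : A * (s / A) = s := by field_simp
    have hB' : B * (s / B) = s := by field_simp
    rw [hA'] at hg0
    rw [hB'] at hg1
    -- combine: s * log (s/A) + s * log (s/B) ≤ 2 s
    have hsum : s * Real.log (s / A) + s * Real.log (s / B) ≤ 2 * s := by linarith
    have hlog : Real.log (s / A) + Real.log (s / B) ≤ 2 := by
      by_contra hcon
      push_neg at hcon
      nlinarith
    have hlA : Real.log (s / A) = Real.log s - Real.log A := Real.log_div hs.ne' hA.ne'
    have hlB : Real.log (s / B) = Real.log s - Real.log B := Real.log_div hs.ne' hB.ne'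
    have h2 : Real.log s ≤ 1 + (Real.log A + Real.log B) / 2 := by
      rw [hlA, hlB] at hlog; linarith
    have hsqrt : Real.sqrt (A * B) = Real.exp ((Real.log A + Real.log B) / 2) := by
      have hpos : 0 < Real.sqrt (A * B) := Real.sqrt_pos.mpr (by positivity)
      rw [← Real.exp_log hpos, Real.log_sqrt (by positivity),
        Real.log_mul hA.ne' hB.ne']
    calc s = Real.exp (Real.log s) := (Real.exp_log hs).symm
      _ ≤ Real.exp (1 + (Real.log A + Real.log B) / 2) := Real.exp_le_exp.mpr h2
      _ = Real.exp 1 * Real.sqrt (A * B) := by rw [Real.exp_add, hsqrt]
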